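/- (Certification Soundness, exact Chebyshev form of Theorem 1.) Let δ ∈ (0,1), set z = 1/√δ, let p ∈ [0,1] be the true contradictory-divergence rate of a term, let k > 0 be the number of eligible comparisons, and let the contradiction count C be a binomial(k,p) random variable (the number of successes in k independent Bernoulli(p) trials). Then the probability that p ≤ u(C,k,z) is at least 1 − δ; equivalently, the event that the term is certified at threshold τ (i.e. u(C,k,z) ≤ τ) while its true rate exceeds τ (i.e. p > τ) has probability at most δ, for every τ ∈ [0,1]. -/

import Mathlib

open MeasureTheory Finset

/-- The Wilson score upper bound for `c` contradictions among `k` eligible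
comparisons, with confidence parameter `z`. -/
noncomputable def wilsonUpper (c k : ℕ) (z : ℝ) : ℝ :=
  let p : ℝ := (c : ℝ) / (k : ℝ)
  (p + z ^ 2 / (2 * (k : ℝ)) +
      z * Real.sqrt (p * (1 - p) / (k : ℝ) + z ^ 2 / (4 * (k : ℝ) ^ 2))) /
    (1 + z ^ 2 / (k : ℝ))

lemma binom_sum0 (n : ℕ) (x : ℝ) :
    ∑ i ∈ range (n+1), (n.choose i : ℝ) * x^i * (1-x)^(n-i) = 1 := by
  calc ∑ i ∈ range (n+1), (n.choose i : ℝ) * x^i * (1-x)^(n-i)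
      = ∑ i ∈ range (n+1), x^i * (1-x)^(n-i) * (n.choose i : ℝ) :=
        Finset.sum_congr rfl fun i _ => by ring
    _ = (x + (1-x))^n := (add_pow x (1-x) n).symm
    _ = 1 := by norm_num

lemma choose_cast_succ (m j : ℕ) :
    (((j+1 : ℕ)):ℝ) * ((m+1).choose (j+1) : ℝ) = ((m:ℝ)+1) * (m.choose j : ℝ) := by
  have h : (j+1) * ((m+1).choose (j+1)) = (m+1) * m.choose j := by
    rw [mul_comm]; exact (Nat.add_one_mul_choose_eq m j).symm
  exact_mod_cast h

lemma binom_sum1 (n : ℕ) (x : ℝ) :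
    ∑ i ∈ range (n+1), (i:ℝ) * ((n.choose i : ℝ) * x^i * (1-x)^(n-i)) = n * x := by
  cases n with
  | zero => simp
  | succ m =>
    rw [Finset.sum_range_succ']
    simp only [Nat.cast_zero, zero_mul, add_zero]
    have key : ∀ j ∈ range (m+1),
        (((j+1:ℕ)):ℝ) * (((m+1).choose (j+1) : ℝ) * x^(j+1) * (1-x)^(m+1-(j+1)))
        = ((m:ℝ)+1) * x * ((m.choose j : ℝ) * x^j * (1-x)^(m-j)) := by
      intro j hj
      have h1 : m+1-(j+1) = m - j := by omega
      rw [h1]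
      have hc := choose_cast_succ m j
      calc (((j+1:ℕ)):ℝ) * (((m+1).choose (j+1) : ℝ) * x^(j+1) * (1-x)^(m-j))
          = ((((j+1:ℕ)):ℝ) * ((m+1).choose (j+1) : ℝ)) * (x^(j+1) * (1-x)^(m-j)) := by ring
        _ = (((m:ℝ)+1) * (m.choose j : ℝ)) * (x^(j+1) * (1-x)^(m-j)) := by rw [hc]
        _ = ((m:ℝ)+1) * x * ((m.choose j : ℝ) * x^j * (1-x)^(m-j)) := by ring
    rw [Finset.sum_congr rfl key, ← Finset.mul_sum, binom_sum0]
    push_cast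
    ring

lemma binom_sum2 (n : ℕ) (x : ℝ) :
    ∑ i ∈ range (n+1), (i:ℝ) * ((i:ℝ)-1) * ((n.choose i : ℝ) * x^i * (1-x)^(n-i))
      = n * ((n:ℝ)-1) * x^2 := by
  cases n with
  | zero => simp
  | succ m =>
    rw [Finset.sum_range_succ']
    simp only [Nat.cast_zero, zero_mul, add_zero]
    have key : ∀ j ∈ range (m+1),
        (((j+1:ℕ)):ℝ) * ((((j+1:ℕ)):ℝ)-1) * (((m+1).choose (j+1) : ℝ) * x^(j+1) * (1-x)^(m+1-(j+1)))
        = ((m:ℝ)+1) * x * ((j:ℝ) * ((m.choose j : ℝ) * x^j * (1-x)^(m-j))) := by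
      intro j hj
      have h1 : m+1-(j+1) = m - j := by omega
      rw [h1]
      have hc := choose_cast_succ m j
      push_cast at hc ⊢
      calc ((j:ℝ)+1) * (((j:ℝ)+1)-1) * (((m+1).choose (j+1) : ℝ) * x^(j+1) * (1-x)^(m-j))
          = (((j:ℝ)+1) * ((m+1).choose (j+1) : ℝ)) * ((j:ℝ) * x^(j+1) * (1-x)^(m-j)) := by ring
        _ = (((m:ℝ)+1) * (m.choose j : ℝ)) * ((j:ℝ) * x^(j+1) * (1-x)^(m-j)) := by rw [hc]
        _ = ((m:ℝ)+1) * x * ((j:ℝ) * ((m.choose j : ℝ) * x^j * (1-x)^(m-j))) := by ring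
    rw [Finset.sum_congr rfl key, ← Finset.mul_sum, binom_sum1]
    push_cast
    ring

lemma binom_var (n : ℕ) (x : ℝ) :
    ∑ i ∈ range (n+1), ((i:ℝ) - n*x)^2 * ((n.choose i : ℝ) * x^i * (1-x)^(n-i))
      = n * x * (1-x) := by
  have expand : ∀ i ∈ range (n+1),
      ((i:ℝ) - n*x)^2 * ((n.choose i : ℝ) * x^i * (1-x)^(n-i))
        = (i:ℝ) * ((i:ℝ)-1) * ((n.choose i : ℝ) * x^i * (1-x)^(n-i))
          + ((1 - 2*(n:ℝ)*x) * ((i:ℝ) * ((n.choose i : ℝ) * x^i * (1-x)^(n-i)))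
          + ((n:ℝ)*x)^2 * ((n.choose i : ℝ) * x^i * (1-x)^(n-i))) :=
    fun i _ => by ring
  rw [Finset.sum_congr rfl expand, Finset.sum_add_distrib, Finset.sum_add_distrib,
    ← Finset.mul_sum, ← Finset.mul_sum, binom_sum2, binom_sum1, binom_sum0]
  ring

lemma real_le_of_sq_le_sq (a b : ℝ) (h : a^2 ≤ b^2) (hb : 0 ≤ b) : a ≤ b := by
  nlinarith [sq_nonneg (a - b), sq_nonneg (a + b)]

lemma wilson_cover (c k : ℕ) (hk : 0 < k) (hc : c ≤ k) (z : ℝ) (hz : 0 ≤ z)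
    (p : ℝ) (hp0 : 0 ≤ p) (hp1 : p ≤ 1)
    (h : p ≤ (c:ℝ)/(k:ℝ) + z * Real.sqrt (p*(1-p)/(k:ℝ))) :
    p ≤ wilsonUpper c k z := by
  have hK : (0:ℝ) < (k:ℝ) := by exact_mod_cast hk
  set K : ℝ := (k:ℝ) with hKdef
  set ph : ℝ := (c:ℝ)/K with hphdef
  have hph0 : 0 ≤ ph := div_nonneg (Nat.cast_nonneg c) hK.le
  have hph1 : ph ≤ 1 := by
    rw [hphdef, div_le_one hK, hKdef]; exact_mod_cast hc
  set w : ℝ := ph*(1-ph)/K + z^2/(4*K^2) with hwdef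
  have hw0 : 0 ≤ w :=
    add_nonneg (div_nonneg (mul_nonneg hph0 (by linarith)) hK.le) (by positivity)
  set r : ℝ := z * Real.sqrt w with hrdef
  have hr0 : 0 ≤ r := mul_nonneg hz (Real.sqrt_nonneg _)
  have hrsq : r^2 = z^2 * w := by
    rw [hrdef, mul_pow, Real.sq_sqrt hw0]
  have hr_ge : z^2/(2*K) ≤ r := by
    have h1 : z^2/(4*K^2) ≤ w := by
      rw [hwdef]
      have : 0 ≤ ph*(1-ph)/K := div_nonneg (mul_nonneg hph0 (by linarith)) hK.le
      linarith
    have h2 : Real.sqrt (z^2/(4*K^2)) = z/(2*K) := by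
      have he : z^2/(4*K^2) = (z/(2*K))^2 := by ring
      rw [he, Real.sqrt_sq (by positivity)]
    calc z^2/(2*K) = z * (z/(2*K)) := by ring
      _ = z * Real.sqrt (z^2/(4*K^2)) := by rw [h2]
      _ ≤ z * Real.sqrt w := mul_le_mul_of_nonneg_left (Real.sqrt_le_sqrt h1) hz
  have ha : (0:ℝ) < 1 + z^2/K := by positivity
  have hKne : K ≠ 0 := hK.ne'
  have hgoal : wilsonUpper c k z = (ph + z^2/(2*K) + r) / (1 + z^2/K) := rfl
  clear_value K ph w r
  rw [hgoal, le_div_iff₀ ha]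
  rcases le_or_gt p ph with hcase | hcase
  · have h2 : p * (z^2/K) ≤ 1 * (z^2/K) :=
      mul_le_mul_of_nonneg_right hp1 (by positivity)
    have heq : z^2/K = z^2/(2*K) + z^2/(2*K) := by ring
    nlinarith
  · have ht0 : 0 ≤ p*(1-p)/K := div_nonneg (mul_nonneg hp0 (by linarith)) hK.le
    have hsq : (p - ph)^2 ≤ z^2 * (p*(1-p)/K) := by
      have h1 : p - ph ≤ z * Real.sqrt (p*(1-p)/K) := by linarith
      have h2 := mul_self_le_mul_self (by linarith : (0:ℝ) ≤ p - ph) h1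
      have h3 : (z * Real.sqrt (p*(1-p)/K)) * (z * Real.sqrt (p*(1-p)/K)) = z^2 * (p*(1-p)/K) := by
        rw [mul_mul_mul_comm, ← sq, ← sq, Real.sq_sqrt ht0]
      nlinarith [h2, h3]
    set L : ℝ := p * (1 + z^2/K) - ph - z^2/(2*K) with hLdef
    have hexpand : L^2 - z^2*w = (1 + z^2/K) * ((p-ph)^2 - z^2*(p*(1-p)/K)) := by
      rw [hLdef, hwdef]
      field_simp
      ring
    clear_value L
    have h3 : (1 + z^2/K) * ((p-ph)^2 - z^2*(p*(1-p)/K)) ≤ 0 :=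
      mul_nonpos_of_nonneg_of_nonpos ha.le (by linarith)
    have hL2 : L^2 ≤ r^2 := by rw [hrsq]; linarith
    have hLr : L ≤ r := real_le_of_sq_le_sq L r hL2 hr0
    linarith

open scoped Classical in
lemma cheb (p : ℝ) (hp0 : 0 ≤ p) (hp1 : p ≤ 1) (k : ℕ) (hk : 0 < k) (z : ℝ) (hz : 0 < z) :
    ∑ i ∈ range (k+1), (if (i:ℝ)/(k:ℝ) + z*Real.sqrt (p*(1-p)/(k:ℝ)) < p
        then (k.choose i : ℝ) * p^i * (1-p)^(k-i) else 0) ≤ 1/z^2 := by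
  have hK : (0:ℝ) < (k:ℝ) := by exact_mod_cast hk
  have hz2 : (0:ℝ) ≤ 1/z^2 := by positivity
  rcases eq_or_lt_of_le hp0 with h0 | hpos
  · have hzero : ∀ i ∈ range (k+1),
        (if (i:ℝ)/(k:ℝ) + z*Real.sqrt (p*(1-p)/(k:ℝ)) < p
          then (k.choose i : ℝ) * p^i * (1-p)^(k-i) else 0) = 0 := by
      intro i _
      rw [if_neg]
      rw [← h0]
      push_neg
      positivity
    rw [Finset.sum_congr rfl hzero, Finset.sum_const, smul_zero]
    exact hz2
  rcases eq_or_lt_of_le hp1 with h1 | hlt1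
  · have hzero : ∀ i ∈ range (k+1),
        (if (i:ℝ)/(k:ℝ) + z*Real.sqrt (p*(1-p)/(k:ℝ)) < p
          then (k.choose i : ℝ) * p^i * (1-p)^(k-i) else 0) = 0 := by
      intro i hi
      split_ifs with hcond
      · have hs0 : (0:ℝ) ≤ z*Real.sqrt (p*(1-p)/(k:ℝ)) :=
          mul_nonneg hz.le (Real.sqrt_nonneg _)
        have hi' : i < k := by
          by_contra hge
          have hik : i = k := by rw [Finset.mem_range] at hi; omega
          subst hik
          rw [div_self hK.ne'] at hcond
          linarith
        have hzp : (1 - p)^(k-i) = 0 := by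
          rw [← h1, sub_self]
          exact zero_pow (by omega)
        rw [hzp, mul_zero]
      · rfl
    rw [Finset.sum_congr rfl hzero, Finset.sum_const, smul_zero]
    exact hz2
  · have h1p : (0:ℝ) < 1 - p := by linarith
    have hD : (0:ℝ) < z^2 * ((k:ℝ)*(p*(1-p))) := by positivity
    have qnn : ∀ i, (0:ℝ) ≤ (k.choose i : ℝ) * p^i * (1-p)^(k-i) := by
      intro i; positivity
    have termwise : ∀ i ∈ range (k+1),
        (if (i:ℝ)/(k:ℝ) + z*Real.sqrt (p*(1-p)/(k:ℝ)) < p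
          then (k.choose i : ℝ) * p^i * (1-p)^(k-i) else 0)
        ≤ ((i:ℝ) - (k:ℝ)*p)^2 * ((k.choose i : ℝ) * p^i * (1-p)^(k-i))
            / (z^2 * ((k:ℝ)*(p*(1-p)))) := by
      intro i _
      split_ifs with hcond
      · have ht0 : (0:ℝ) ≤ p*(1-p)/(k:ℝ) := by positivity
        have hs0 : (0:ℝ) ≤ z*Real.sqrt (p*(1-p)/(k:ℝ)) := by positivity
        have h2 := mul_self_lt_mul_self hs0 (by linarith :
          z*Real.sqrt (p*(1-p)/(k:ℝ)) < p - (i:ℝ)/(k:ℝ))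
        have h3 : (z * Real.sqrt (p*(1-p)/(k:ℝ))) * (z * Real.sqrt (p*(1-p)/(k:ℝ)))
            = z^2 * (p*(1-p)/(k:ℝ)) := by
          rw [mul_mul_mul_comm, ← sq, ← sq, Real.sq_sqrt ht0]
        have hsq : z^2 * (p*(1-p)/(k:ℝ)) < (p - (i:ℝ)/(k:ℝ))^2 := by
          rw [← h3]; nlinarith [h2]
        have hid : ((i:ℝ) - (k:ℝ)*p)^2 = (p - (i:ℝ)/(k:ℝ))^2 * (k:ℝ)^2 := by
          field_simp
          ring
        have hid2 : z^2*((k:ℝ)*(p*(1-p))) = (z^2*(p*(1-p)/(k:ℝ)))*(k:ℝ)^2 := by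
          field_simp
        have hgt : z^2*((k:ℝ)*(p*(1-p))) ≤ ((i:ℝ) - (k:ℝ)*p)^2 := by
          rw [hid, hid2]
          exact (mul_lt_mul_of_pos_right hsq (by positivity)).le
        rw [le_div_iff₀ hD]
        nlinarith [mul_le_mul_of_nonneg_left hgt (qnn i)]
      · positivity
    calc ∑ i ∈ range (k+1), (if (i:ℝ)/(k:ℝ) + z*Real.sqrt (p*(1-p)/(k:ℝ)) < p
            then (k.choose i : ℝ) * p^i * (1-p)^(k-i) else 0)
        ≤ ∑ i ∈ range (k+1), ((i:ℝ) - (k:ℝ)*p)^2 * ((k.choose i : ℝ) * p^i * (1-p)^(k-i))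
            / (z^2 * ((k:ℝ)*(p*(1-p)))) := Finset.sum_le_sum termwise
      _ = (∑ i ∈ range (k+1), ((i:ℝ) - (k:ℝ)*p)^2 * ((k.choose i : ℝ) * p^i * (1-p)^(k-i)))
            / (z^2 * ((k:ℝ)*(p*(1-p)))) := by rw [← Finset.sum_div]
      _ = ((k:ℝ) * p * (1-p)) / (z^2 * ((k:ℝ)*(p*(1-p)))) := by rw [binom_var]
      _ = 1/z^2 := by
          field_simp

lemma binomial_pmf_ofReal (p : ℝ) (hp0 : 0 ≤ p) (hp1 : p ≤ 1)
    (hp : ENNReal.ofReal p ≤ 1) (k : ℕ) (i : Fin (k+1)) :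
    (PMF.binomial (Real.toNNReal p) (ENNReal.coe_le_one_iff.mp hp) k) i
      = ENNReal.ofReal ((k.choose (i:ℕ) : ℝ) * p^(i:ℕ) * (1-p)^(k-(i:ℕ))) := by
  rw [PMF.binomial_apply]
  simp only [Fin.val_last]
  have e : (k.choose (i:ℕ) : ℝ) * p^(i:ℕ) * (1-p)^(k-(i:ℕ)) = ((Real.toNNReal p ^ (i:ℕ) * (1 - Real.toNNReal p)^(k-(i:ℕ)) * (k.choose (i:ℕ) : NNReal) : NNReal) : ℝ) := by
    rw [NNReal.coe_mul, NNReal.coe_mul, NNReal.coe_pow, NNReal.coe_pow, NNReal.coe_sub (Real.toNNReal_le_one.mpr hp1), Real.coe_toNNReal p hp0]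
    push_cast; ring
  rw [e, ENNReal.ofReal_coe_nnreal]
  push_cast
  rfl

lemma binom_meas (p : ℝ) (hp0 : 0 ≤ p) (hp1 : p ≤ 1)
    (hp : ENNReal.ofReal p ≤ 1) (k : ℕ) (P : ℕ → Prop) [DecidablePred P] :
    (PMF.binomial (Real.toNNReal p) (ENNReal.coe_le_one_iff.mp hp) k).toMeasure {c : Fin (k+1) | P (c:ℕ)}
      = ENNReal.ofReal (∑ i ∈ range (k+1),
          if P i then (k.choose i : ℝ) * p^i * (1-p)^(k-i) else 0) := by
  rw [(PMF.binomial (Real.toNNReal p) (ENNReal.coe_le_one_iff.mp hp) k).toMeasure_apply (s := {c : Fin (k+1) | P (c:ℕ)}) trivial,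
    tsum_fintype]
  have hterm : ∀ c : Fin (k+1),
      Set.indicator {c : Fin (k+1) | P (c:ℕ)} (⇑(PMF.binomial (Real.toNNReal p) (ENNReal.coe_le_one_iff.mp hp) k)) c
        = ENNReal.ofReal (if P (c:ℕ) then (k.choose (c:ℕ) : ℝ) * p^(c:ℕ) * (1-p)^(k-(c:ℕ)) else 0) := by
    intro c
    rw [Set.indicator_apply]
    simp only [Set.mem_setOf_eq]
    split_ifs with h
    · exact binomial_pmf_ofReal p hp0 hp1 hp k c
    · rw [ENNReal.ofReal_zero]
  calc ∑ c : Fin (k+1), Set.indicator {c : Fin (k+1) | P (c:ℕ)} (⇑(PMF.binomial (Real.toNNReal p) (ENNReal.coe_le_one_iff.mp hp) k)) c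
      = ∑ c : Fin (k+1), ENNReal.ofReal (if P (c:ℕ) then (k.choose (c:ℕ) : ℝ) * p^(c:ℕ) * (1-p)^(k-(c:ℕ)) else 0) :=
        Finset.sum_congr rfl fun c _ => hterm c
    _ = ∑ i ∈ range (k+1), ENNReal.ofReal (if P i then (k.choose i : ℝ) * p^i * (1-p)^(k-i) else 0) :=
        Fin.sum_univ_eq_sum_range (fun i => ENNReal.ofReal (if P i then (k.choose i : ℝ) * p^i * (1-p)^(k-i) else 0)) (k+1)
    _ = ENNReal.ofReal (∑ i ∈ range (k+1), if P i then (k.choose i : ℝ) * p^i * (1-p)^(k-i) else 0) := by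
        rw [ENNReal.ofReal_sum_of_nonneg]
        intro i _
        split_ifs with h
        · exact mul_nonneg (mul_nonneg (Nat.cast_nonneg _) (pow_nonneg hp0 _))
            (pow_nonneg (by linarith) _)
        · exact le_refl 0

theorem certification_soundness (δ : ℝ) (hδ0 : 0 < δ) (hδ1 : δ < 1)
    (p : ℝ) (hp0 : 0 ≤ p) (hp1 : p ≤ 1) (k : ℕ) (hk : 0 < k)
    (hp : ENNReal.ofReal p ≤ 1) :
    (1 - ENNReal.ofReal δ ≤
        (PMF.binomial (Real.toNNReal p) (ENNReal.coe_le_one_iff.mp hp) k).toMeasure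
          {c : Fin (k + 1) | p ≤ wilsonUpper (c : ℕ) k (1 / Real.sqrt δ)}) ∧
      ∀ τ : ℝ, 0 ≤ τ → τ ≤ 1 →
        (PMF.binomial (Real.toNNReal p) (ENNReal.coe_le_one_iff.mp hp) k).toMeasure
            {c : Fin (k + 1) |
              wilsonUpper (c : ℕ) k (1 / Real.sqrt δ) ≤ τ ∧ τ < p} ≤
          ENNReal.ofReal δ := by
  classical
  set z : ℝ := 1 / Real.sqrt δ with hzdef
  have hsδ : 0 < Real.sqrt δ := Real.sqrt_pos.mpr hδ0
  have hz : 0 < z := by positivity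
  have hinvz : 1/z^2 = δ := by
    rw [hzdef, div_pow, one_pow, Real.sq_sqrt hδ0.le, one_div_one_div]
  -- the three finite sums
  have qnn : ∀ i, (0:ℝ) ≤ (k.choose i : ℝ) * p^i * (1-p)^(k-i) := fun i =>
    mul_nonneg (mul_nonneg (Nat.cast_nonneg _) (pow_nonneg hp0 _))
      (pow_nonneg (by linarith) _)
  have hbad : ∑ i ∈ range (k+1),
      (if ¬ (p ≤ wilsonUpper i k z) then (k.choose i : ℝ) * p^i * (1-p)^(k-i) else 0) ≤ δ := by
    have hle : ∀ i ∈ range (k+1),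
        (if ¬ (p ≤ wilsonUpper i k z) then (k.choose i : ℝ) * p^i * (1-p)^(k-i) else 0)
        ≤ (if (i:ℝ)/(k:ℝ) + z*Real.sqrt (p*(1-p)/(k:ℝ)) < p
            then (k.choose i : ℝ) * p^i * (1-p)^(k-i) else 0) := by
      intro i hi
      have hik : i ≤ k := by rw [Finset.mem_range] at hi; omega
      by_cases h1 : p ≤ wilsonUpper i k z
      · rw [if_neg (not_not_intro h1)]
        split_ifs with h2
        · exact qnn i
        · exact le_refl 0
      · rw [if_pos h1]
        have h2 : (i:ℝ)/(k:ℝ) + z*Real.sqrt (p*(1-p)/(k:ℝ)) < p := by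
          by_contra hno
          push_neg at hno
          exact h1 (wilson_cover i k hk hik z hz.le p hp0 hp1 hno)
        rw [if_pos h2]
    calc ∑ i ∈ range (k+1),
          (if ¬ (p ≤ wilsonUpper i k z) then (k.choose i : ℝ) * p^i * (1-p)^(k-i) else 0)
        ≤ ∑ i ∈ range (k+1), (if (i:ℝ)/(k:ℝ) + z*Real.sqrt (p*(1-p)/(k:ℝ)) < p
            then (k.choose i : ℝ) * p^i * (1-p)^(k-i) else 0) := Finset.sum_le_sum hle
      _ ≤ 1/z^2 := cheb p hp0 hp1 k hk z hz
      _ = δ := hinvz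
  have hsplit : (∑ i ∈ range (k+1),
        (if p ≤ wilsonUpper i k z then (k.choose i : ℝ) * p^i * (1-p)^(k-i) else 0))
      + (∑ i ∈ range (k+1),
        (if ¬ (p ≤ wilsonUpper i k z) then (k.choose i : ℝ) * p^i * (1-p)^(k-i) else 0)) = 1 := by
    rw [← Finset.sum_add_distrib]
    calc ∑ i ∈ range (k+1),
          ((if p ≤ wilsonUpper i k z then (k.choose i : ℝ) * p^i * (1-p)^(k-i) else 0)
            + (if ¬ (p ≤ wilsonUpper i k z) then (k.choose i : ℝ) * p^i * (1-p)^(k-i) else 0))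
        = ∑ i ∈ range (k+1), (k.choose i : ℝ) * p^i * (1-p)^(k-i) := by
          refine Finset.sum_congr rfl fun i _ => ?_
          by_cases h : p ≤ wilsonUpper i k z
          · rw [if_pos h, if_neg (not_not_intro h), add_zero]
          · rw [if_neg h, if_pos h, zero_add]
      _ = 1 := binom_sum0 k p
  constructor
  · rw [binom_meas p hp0 hp1 hp k (fun n => p ≤ wilsonUpper n k z)]
    have hgs : 1 - δ ≤ ∑ i ∈ range (k+1),
        (if p ≤ wilsonUpper i k z then (k.choose i : ℝ) * p^i * (1-p)^(k-i) else 0) := by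
      linarith
    calc (1:ENNReal) - ENNReal.ofReal δ = ENNReal.ofReal (1 - δ) := by
          rw [ENNReal.ofReal_sub 1 hδ0.le, ENNReal.ofReal_one]
      _ ≤ _ := ENNReal.ofReal_le_ofReal hgs
  · intro τ hτ0 hτ1
    rw [binom_meas p hp0 hp1 hp k (fun n => wilsonUpper n k z ≤ τ ∧ τ < p)]
    apply ENNReal.ofReal_le_ofReal
    refine le_trans (Finset.sum_le_sum ?_) hbad
    intro i hi
    by_cases h1 : wilsonUpper i k z ≤ τ ∧ τ < p
    · rw [if_pos h1]
      have h2 : ¬ (p ≤ wilsonUpper i k z) := not_le.mpr (lt_of_le_of_lt h1.1 h1.2)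
      rw [if_pos h2]
    · rw [if_neg h1]
      split_ifs with h2
      · exact le_refl 0
      · exact qnn i
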